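/- d₅ = d₆ = π/2: the maximum over 5-point (and over 6-point) subsets of S² of the minimal pairwise angular distance equals π/2; moreover for N = 5 the maximum is attained by non-congruent configurations (the optimal configuration is not unique up to isometry). -/

import Mathlib

open scoped RealInnerProductSpace
open scoped Classical

noncomputable section

/-- Angular (geodesic) distance on the unit sphere in `ℝ³`. -/
def gdist (x y : EuclideanSpace ℝ (Fin 3)) : ℝ := Real.arccos ⟪x, y⟫

/-- `X` is an optimal configuration for the Tammes problem value `π/2`: all points are on
the unit sphere and pairwise at angular distance at least `π/2`. -/
def IsOptimalConfig (n : ℕ) (X : Finset (EuclideanSpace ℝ (Fin 3))) : Prop :=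
  X.card = n ∧ (∀ p ∈ X, ‖p‖ = 1) ∧
    ∀ p ∈ X, ∀ q ∈ X, p ≠ q → Real.pi / 2 ≤ gdist p q

/- ### Auxiliary material -/

/-- In a real inner product space of dimension at most `n`, among any `n + 2` vectors two
(distinct indices) have nonnegative inner product. -/
lemma tammes_aux_nonneg (n : ℕ) : ∀ (E : Type) [NormedAddCommGroup E] [InnerProductSpace ℝ E]
    [FiniteDimensional ℝ E], Module.finrank ℝ E ≤ n →
    ∀ v : Fin (n + 2) → E, ∃ i j, i ≠ j ∧ 0 ≤ ⟪v i, v j⟫ := by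
  induction n with
  | zero =>
    intro E _ _ _ h v
    have : Subsingleton E := Module.finrank_zero_iff.mp (le_antisymm h (Nat.zero_le _))
    refine ⟨0, 1, by decide, ?_⟩
    rw [Subsingleton.elim (v 0) 0, inner_zero_left]
  | succ n ih =>
    intro E _ _ _ h v
    by_contra hcon
    push_neg at hcon
    set u := v (Fin.last (n + 2)) with hu_def
    have hneg : ∀ i : Fin (n + 2), ⟪u, v i.castSucc⟫ < 0 := fun i =>
      hcon (Fin.last (n + 2)) i.castSucc (Fin.castSucc_lt_last i).ne'
    have hu : u ≠ 0 := by
      intro h0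
      have := hneg 0
      rw [h0, inner_zero_left] at this
      exact lt_irrefl _ this
    have huu : (0 : ℝ) < ⟪u, u⟫ :=
      lt_of_le_of_ne real_inner_self_nonneg (Ne.symm (inner_self_ne_zero.mpr hu))
    set c : Fin (n + 2) → ℝ := fun i => ⟪u, v i.castSucc⟫ / ⟪u, u⟫ with hc
    have hcneg : ∀ i, c i < 0 := fun i => div_neg_of_neg_of_pos (hneg i) huu
    set w : Fin (n + 2) → E := fun i => v i.castSucc - c i • u with hw
    have hwK : ∀ i, ⟪u, w i⟫ = 0 := by
      intro i
      simp only [hw, inner_sub_right, real_inner_smul_right]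
      simp only [hc]; rw [div_mul_cancel₀ _ huu.ne', sub_self]
    have hwv : ∀ i j, ⟪w i, w j⟫ = ⟪v i.castSucc, v j.castSucc⟫ - c i * ⟪u, v j.castSucc⟫ := by
      intro i j
      have h1 : ⟪w i, u⟫ = 0 := by rw [real_inner_comm]; exact hwK i
      calc ⟪w i, w j⟫ = ⟪w i, v j.castSucc⟫ - c j * ⟪w i, u⟫ := by
            rw [show w j = v j.castSucc - c j • u from rfl, inner_sub_right,
              real_inner_smul_right]
        _ = ⟪w i, v j.castSucc⟫ := by rw [h1]; ring
        _ = ⟪v i.castSucc, v j.castSucc⟫ - c i * ⟪u, v j.castSucc⟫ := by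
            rw [show w i = v i.castSucc - c i • u from rfl, inner_sub_left,
              real_inner_smul_left]
    have hwneg : ∀ i j, i ≠ j → ⟪w i, w j⟫ < 0 := by
      intro i j hij
      rw [hwv i j]
      have h1 : ⟪v i.castSucc, v j.castSucc⟫ < 0 :=
        hcon _ _ (fun hh => hij (Fin.castSucc_injective _ hh))
      nlinarith [hcneg i, hneg j]
    have hmem : ∀ i, w i ∈ (ℝ ∙ u)ᗮ := fun i =>
      Submodule.mem_orthogonal_singleton_iff_inner_right.mpr (hwK i)
    have hrank : Module.finrank ℝ ((ℝ ∙ u)ᗮ : Submodule ℝ E) ≤ n := by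
      have h2 := Submodule.finrank_add_finrank_orthogonal (K := (ℝ ∙ u))
      rw [finrank_span_singleton hu] at h2
      omega
    obtain ⟨i, j, hij, hpos⟩ := ih ((ℝ ∙ u)ᗮ : Submodule ℝ E) hrank (fun i => ⟨w i, hmem i⟩)
    exact absurd hpos (not_le.mpr (hwneg i j hij))

/-- Concrete points of `ℝ³`. -/
def pt (a b c : ℝ) : EuclideanSpace ℝ (Fin 3) := !₂[a, b, c]

lemma pt_inner (a b c a' b' c' : ℝ) :
    ⟪pt a b c, pt a' b' c'⟫ = a * a' + b * b' + c * c' := by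
  simp [pt, PiLp.inner_apply, Fin.sum_univ_three]; ring

lemma pt_norm (a b c : ℝ) : ‖pt a b c‖ = Real.sqrt (a ^ 2 + b ^ 2 + c ^ 2) := by
  rw [EuclideanSpace.norm_eq]
  congr 1
  simp [pt, Fin.sum_univ_three, sq_abs]

lemma pt_eq_iff {a b c a' b' c' : ℝ} :
    pt a b c = pt a' b' c' ↔ a = a' ∧ b = b' ∧ c = c' := by
  constructor
  · intro h
    exact ⟨congrArg (fun x => x 0) h, congrArg (fun x => x 1) h, congrArg (fun x => x 2) h⟩
  · rintro ⟨rfl, rfl, rfl⟩; rfl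

lemma pt_neg (a b c : ℝ) : -pt a b c = pt (-a) (-b) (-c) := by
  ext i
  fin_cases i <;> rfl

lemma gdist_ge {x y : EuclideanSpace ℝ (Fin 3)} (h : ⟪x, y⟫ ≤ 0) :
    Real.pi / 2 ≤ gdist x y := by
  unfold gdist
  rw [Real.arccos]
  have := Real.arcsin_nonpos.mpr h
  linarith

lemma gdist_le {x y : EuclideanSpace ℝ (Fin 3)} (h : 0 ≤ ⟪x, y⟫) :
    gdist x y ≤ Real.pi / 2 := Real.arccos_le_pi_div_two.mpr h

/-- Any `n+2` points among which every two distinct ones are listed give two at angular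
distance at most `π/2`; specialized upper-bound extraction. -/
lemma tammes_upper (m : ℕ) (hm : 3 ≤ m) (X : Finset (EuclideanSpace ℝ (Fin 3)))
    (hc : X.card = m + 2) :
    ∃ p ∈ X, ∃ q ∈ X, p ≠ q ∧ gdist p q ≤ Real.pi / 2 := by
  have hrank : Module.finrank ℝ (EuclideanSpace ℝ (Fin 3)) ≤ m := by
    simpa [finrank_euclideanSpace] using hm
  have hcard : Fintype.card X = m + 2 := by simp [hc]
  let e' : Fin (m + 2) ≃ X := (Fintype.equivFinOfCardEq hcard).symm
  obtain ⟨i, j, hij, hpos⟩ := tammes_aux_nonneg m (EuclideanSpace ℝ (Fin 3)) hrank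
    (fun i => (e' i : EuclideanSpace ℝ (Fin 3)))
  refine ⟨e' i, (e' i).2, e' j, (e' j).2, ?_, gdist_le hpos⟩
  intro hpq
  exact hij (e'.injective (Subtype.ext hpq))

theorem d_five_eq_d_six_eq_pi_div_two :
    (∃ X, IsOptimalConfig 5 X) ∧
    (∃ X, IsOptimalConfig 6 X) ∧
    (∀ X : Finset (EuclideanSpace ℝ (Fin 3)), X.card = 5 → (∀ p ∈ X, ‖p‖ = 1) →
      ∃ p ∈ X, ∃ q ∈ X, p ≠ q ∧ gdist p q ≤ Real.pi / 2) ∧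
    (∀ X : Finset (EuclideanSpace ℝ (Fin 3)), X.card = 6 → (∀ p ∈ X, ‖p‖ = 1) →
      ∃ p ∈ X, ∃ q ∈ X, p ≠ q ∧ gdist p q ≤ Real.pi / 2) ∧
    (∃ X Y : Finset (EuclideanSpace ℝ (Fin 3)),
      IsOptimalConfig 5 X ∧ IsOptimalConfig 5 Y ∧
      ∀ g : EuclideanSpace ℝ (Fin 3) ≃ₗᵢ[ℝ] EuclideanSpace ℝ (Fin 3),
        g '' (X : Set (EuclideanSpace ℝ (Fin 3))) ≠ (Y : Set (EuclideanSpace ℝ (Fin 3)))) := by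
  -- the two 5-point configurations and the octahedron
  set X : Finset (EuclideanSpace ℝ (Fin 3)) :=
    {pt 0 0 1, pt 0 0 (-1), pt 1 0 0, pt (-1) 0 0, pt 0 1 0} with hX
  set Y : Finset (EuclideanSpace ℝ (Fin 3)) :=
    {pt 0 0 1, pt 0 0 (-1), pt 1 0 0, pt 0 1 0, pt (-3/5) (-4/5) 0} with hY
  set Z : Finset (EuclideanSpace ℝ (Fin 3)) :=
    {pt 0 0 1, pt 0 0 (-1), pt 1 0 0, pt (-1) 0 0, pt 0 1 0, pt 0 (-1) 0} with hZ
  have hXopt : IsOptimalConfig 5 X := by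
    refine ⟨?_, ?_, ?_⟩
    · rw [hX]
      rw [Finset.card_insert_of_notMem (by simp only [Finset.mem_insert, Finset.mem_singleton, pt_eq_iff]; norm_num),
        Finset.card_insert_of_notMem (by simp only [Finset.mem_insert, Finset.mem_singleton, pt_eq_iff]; norm_num),
        Finset.card_insert_of_notMem (by simp only [Finset.mem_insert, Finset.mem_singleton, pt_eq_iff]; norm_num),
        Finset.card_insert_of_notMem (by simp only [Finset.mem_insert, Finset.mem_singleton, pt_eq_iff]; norm_num),
        Finset.card_singleton]
    · intro p hp
      rw [hX] at hp
      simp only [Finset.mem_insert, Finset.mem_singleton] at hp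
      rcases hp with rfl | rfl | rfl | rfl | rfl <;>
        · rw [pt_norm]; norm_num
    · intro p hp q hq hpq
      rw [hX] at hp hq
      simp only [Finset.mem_insert, Finset.mem_singleton] at hp hq
      rcases hp with rfl | rfl | rfl | rfl | rfl <;>
        rcases hq with rfl | rfl | rfl | rfl | rfl <;>
          first
            | exact absurd rfl hpq
            | · apply gdist_ge; rw [pt_inner]; norm_num
  have hYopt : IsOptimalConfig 5 Y := by
    refine ⟨?_, ?_, ?_⟩
    · rw [hY]
      rw [Finset.card_insert_of_notMem (by simp only [Finset.mem_insert, Finset.mem_singleton, pt_eq_iff]; norm_num),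
        Finset.card_insert_of_notMem (by simp only [Finset.mem_insert, Finset.mem_singleton, pt_eq_iff]; norm_num),
        Finset.card_insert_of_notMem (by simp only [Finset.mem_insert, Finset.mem_singleton, pt_eq_iff]; norm_num),
        Finset.card_insert_of_notMem (by simp only [Finset.mem_insert, Finset.mem_singleton, pt_eq_iff]; norm_num),
        Finset.card_singleton]
    · intro p hp
      rw [hY] at hp
      simp only [Finset.mem_insert, Finset.mem_singleton] at hp
      rcases hp with rfl | rfl | rfl | rfl | rfl <;>
        · rw [pt_norm]; norm_num
      -- last point: (-3/5)^2 + (-4/5)^2 + 0 = 1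
    · intro p hp q hq hpq
      rw [hY] at hp hq
      simp only [Finset.mem_insert, Finset.mem_singleton] at hp hq
      rcases hp with rfl | rfl | rfl | rfl | rfl <;>
        rcases hq with rfl | rfl | rfl | rfl | rfl <;>
          first
            | exact absurd rfl hpq
            | · apply gdist_ge; rw [pt_inner]; norm_num
  have hZopt : IsOptimalConfig 6 Z := by
    refine ⟨?_, ?_, ?_⟩
    · rw [hZ]
      rw [Finset.card_insert_of_notMem (by simp only [Finset.mem_insert, Finset.mem_singleton, pt_eq_iff]; norm_num),
        Finset.card_insert_of_notMem (by simp only [Finset.mem_insert, Finset.mem_singleton, pt_eq_iff]; norm_num),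
        Finset.card_insert_of_notMem (by simp only [Finset.mem_insert, Finset.mem_singleton, pt_eq_iff]; norm_num),
        Finset.card_insert_of_notMem (by simp only [Finset.mem_insert, Finset.mem_singleton, pt_eq_iff]; norm_num),
        Finset.card_insert_of_notMem (by simp only [Finset.mem_insert, Finset.mem_singleton, pt_eq_iff]; norm_num),
        Finset.card_singleton]
    · intro p hp
      rw [hZ] at hp
      simp only [Finset.mem_insert, Finset.mem_singleton] at hp
      rcases hp with rfl | rfl | rfl | rfl | rfl | rfl <;>
        · rw [pt_norm]; norm_num
    · intro p hp q hq hpq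
      rw [hZ] at hp hq
      simp only [Finset.mem_insert, Finset.mem_singleton] at hp hq
      rcases hp with rfl | rfl | rfl | rfl | rfl | rfl <;>
        rcases hq with rfl | rfl | rfl | rfl | rfl | rfl <;>
          first
            | exact absurd rfl hpq
            | · apply gdist_ge; rw [pt_inner]; norm_num
  refine ⟨⟨X, hXopt⟩, ⟨Z, hZopt⟩, ?_, ?_, ⟨X, Y, hXopt, hYopt, ?_⟩⟩
  · intro W hW _
    exact tammes_upper 3 le_rfl W hW
  · intro W hW _
    exact tammes_upper 4 (by norm_num) W hW
  · -- non-congruence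
    intro g hg
    -- antipodal pairs in Y come only from the poles
    have hYantip : ∀ a ∈ Y, -a ∈ Y → a = pt 0 0 1 ∨ a = pt 0 0 (-1) := by
      intro a ha hna
      rw [hY] at ha hna
      simp only [Finset.mem_insert, Finset.mem_singleton] at ha hna
      rcases ha with rfl | rfl | rfl | rfl | rfl
      · exact Or.inl rfl
      · exact Or.inr rfl
      all_goals
        exfalso
        rw [pt_neg] at hna
        simp only [pt_eq_iff] at hna
        rcases hna with ⟨h1, h2, h3⟩ | ⟨h1, h2, h3⟩ | ⟨h1, h2, h3⟩ | ⟨h1, h2, h3⟩ |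
          ⟨h1, h2, h3⟩ <;> linarith
    -- images of members of X
    have hmemY : ∀ p ∈ X, g p ∈ Y := by
      intro p hp
      have : g p ∈ (Y : Set (EuclideanSpace ℝ (Fin 3))) := by
        rw [← hg]
        exact Set.mem_image_of_mem g (Finset.mem_coe.mpr hp)
      exact Finset.mem_coe.mp this
    have hx1 : pt 1 0 0 ∈ X := by rw [hX]; simp
    have hx1' : pt (-1) 0 0 ∈ X := by rw [hX]; simp
    have hx2 : pt 0 0 1 ∈ X := by rw [hX]; simp
    have hx2' : pt 0 0 (-1) ∈ X := by rw [hX]; simp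
    have hneg1 : pt (-1) 0 0 = -pt 1 0 0 := by rw [pt_neg, pt_eq_iff]; norm_num
    have hneg2 : pt 0 0 (-1) = -pt 0 0 1 := by rw [pt_neg, pt_eq_iff]; norm_num
    have ha : g (pt 1 0 0) ∈ Y := hmemY _ hx1
    have ha' : -g (pt 1 0 0) ∈ Y := by
      have := hmemY _ hx1'
      rwa [hneg1, map_neg] at this
    have hb : g (pt 0 0 1) ∈ Y := hmemY _ hx2
    have hb' : -g (pt 0 0 1) ∈ Y := by
      have := hmemY _ hx2'
      rwa [hneg2, map_neg] at this
    have hA := hYantip _ ha ha'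
    have hB := hYantip _ hb hb'
    have hginj : Function.Injective g := g.injective
    rcases hA with hA | hA <;> rcases hB with hB | hB
    · have : pt 1 0 0 = pt 0 0 1 := hginj (hA.trans hB.symm)
      rw [pt_eq_iff] at this; norm_num at this
    · have hgg : g (pt 1 0 0) = g (-(pt 0 0 1)) := by
        rw [map_neg, hA, hB, hneg2, neg_neg]
      have : pt 1 0 0 = -(pt 0 0 1) := hginj hgg
      rw [pt_neg, pt_eq_iff] at this; norm_num at this
    · have hgg : g (pt 1 0 0) = g (-(pt 0 0 1)) := by
        rw [map_neg, hA, hB, hneg2]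
      have : pt 1 0 0 = -(pt 0 0 1) := hginj hgg
      rw [pt_neg, pt_eq_iff] at this; norm_num at this
    · have : pt 1 0 0 = pt 0 0 1 := hginj (hA.trans hB.symm)
      rw [pt_eq_iff] at this; norm_num at this
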